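/- Let (V,∘,[·,·]) be a Gel'fand–Dorfman bialgebra over ℂ. On the space 𝓛(V) = ⊕_{m∈ℤ} V, whose elements are written as finite sums of symbols a⊗t^m (a ∈ V, m ∈ ℤ), define a bilinear bracket by [a⊗t^m, b⊗t^n] = [a,b]⊗t^{m+n} + m(a∘b)⊗t^{m+n−1} − n(b∘a)⊗t^{m+n−1}. Then this bracket is skew-symmetric and satisfies the Jacobi identity; that is, 𝓛(V) is a Lie algebra. -/

import Mathlib

/-- The bracket on `𝓛(V) = ⊕_{m∈ℤ} V` (an element `x : ℤ →₀ V` represents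
`Σ_m (x m)⊗t^m`), determined by
`[a⊗t^m, b⊗t^n] = [a,b]⊗t^{m+n} + (m(a∘b) − n(b∘a))⊗t^{m+n−1}`. -/
noncomputable def loopBracket {V : Type*} [AddCommGroup V] [Module ℂ V]
    (circ br : V →ₗ[ℂ] V →ₗ[ℂ] V) (x y : ℤ →₀ V) : ℤ →₀ V :=
  x.sum fun m a => y.sum fun n b =>
    Finsupp.single (m + n) (br a b)
      + Finsupp.single (m + n - 1) ((m : ℂ) • circ a b - (n : ℂ) • circ b a)

section Aux

variable {V : Type*} [AddCommGroup V] [Module ℂ V] (circ br : V →ₗ[ℂ] V →ₗ[ℂ] V)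

lemma lb_single (m n : ℤ) (a b : V) :
    loopBracket circ br (Finsupp.single m a) (Finsupp.single n b)
      = Finsupp.single (m + n) (br a b)
        + Finsupp.single (m + n - 1) ((m : ℂ) • circ a b - (n : ℂ) • circ b a) := by
  unfold loopBracket
  rw [Finsupp.sum_single_index, Finsupp.sum_single_index] <;> simp

lemma lb_zero_left (y : ℤ →₀ V) : loopBracket circ br 0 y = 0 := Finsupp.sum_zero_index

lemma lb_zero_right (x : ℤ →₀ V) : loopBracket circ br x 0 = 0 := by
  unfold loopBracket; simp [Finsupp.sum_zero_index]

private lemma lb_aux1 (m n : ℤ) (a₁ a₂ b : V) :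
    (m : ℂ) • circ (a₁ + a₂) b - (n : ℂ) • circ b (a₁ + a₂)
      = ((m : ℂ) • circ a₁ b - (n : ℂ) • circ b a₁)
        + ((m : ℂ) • circ a₂ b - (n : ℂ) • circ b a₂) := by
  simp only [map_add, LinearMap.add_apply, smul_add]; abel

private lemma lb_aux2 (m n : ℤ) (a b₁ b₂ : V) :
    (m : ℂ) • circ a (b₁ + b₂) - (n : ℂ) • circ (b₁ + b₂) a
      = ((m : ℂ) • circ a b₁ - (n : ℂ) • circ b₁ a)
        + ((m : ℂ) • circ a b₂ - (n : ℂ) • circ b₂ a) := by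
  simp only [map_add, LinearMap.add_apply, smul_add]; abel

lemma lb_add_left (x x' y : ℤ →₀ V) :
    loopBracket circ br (x + x') y
      = loopBracket circ br x y + loopBracket circ br x' y := by
  unfold loopBracket
  apply Finsupp.sum_add_index
  · intro m _
    simp
  · intro m _ a₁ a₂
    rw [← Finsupp.sum_add]
    refine Finsupp.sum_congr fun n _ => ?_
    rw [lb_aux1 circ, Finsupp.single_add, map_add, LinearMap.add_apply, Finsupp.single_add]
    abel

lemma lb_add_right (x y y' : ℤ →₀ V) :
    loopBracket circ br x (y + y')
      = loopBracket circ br x y + loopBracket circ br x y' := by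
  unfold loopBracket
  rw [← Finsupp.sum_add]
  refine Finsupp.sum_congr fun m _ => ?_
  apply Finsupp.sum_add_index
  · intro n _
    simp
  · intro n _ b₁ b₂
    rw [lb_aux2 circ, Finsupp.single_add, map_add, Finsupp.single_add]
    abel

end Aux

/-- Let `(V,∘,[·,·])` be a Gel'fand–Dorfman bialgebra over `ℂ`.
Then the bracket `[a⊗t^m, b⊗t^n] = [a,b]⊗t^{m+n} + m(a∘b)⊗t^{m+n−1} − n(b∘a)⊗t^{m+n−1}`
on `𝓛(V) = ⊕_{m∈ℤ} V` is skew-symmetric and satisfies the Jacobi identity; that is,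
`𝓛(V)` is a Lie algebra. -/
theorem stmt_7 {V : Type*} [AddCommGroup V] [Module ℂ V]
    (circ br : V →ₗ[ℂ] V →ₗ[ℂ] V)
    -- Novikov algebra axioms for `∘ = circ`
    (hNov1 : ∀ a b c : V, circ (circ a b) c - circ a (circ b c)
      = circ (circ b a) c - circ b (circ a c))
    (hNov2 : ∀ a b c : V, circ (circ a b) c = circ (circ a c) b)
    -- Lie algebra axioms for `[·,·] = br`
    (hSkew : ∀ a b : V, br a b = - br b a)
    (hJacobi : ∀ a b c : V, br (br a b) c + br (br b c) a + br (br c a) b = 0)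
    -- compatibility condition of the Gel'fand–Dorfman bialgebra
    (hCompat : ∀ a b c : V, br (circ a b) c - br (circ a c) b + circ (br a b) c
      - circ (br a c) b - circ a (br b c) = 0) :
    -- skew-symmetry
    (∀ x y : ℤ →₀ V, loopBracket circ br x y = - loopBracket circ br y x)
    -- Jacobi identity
    ∧ (∀ x y z : ℤ →₀ V,
        loopBracket circ br (loopBracket circ br x y) z
          + loopBracket circ br (loopBracket circ br y z) x
          + loopBracket circ br (loopBracket circ br z x) y = 0) := by
  constructor
  · -- skew-symmetry
    intro x y
    rw [eq_neg_iff_add_eq_zero]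
    induction x using Finsupp.induction_linear with
    | zero => simp [lb_zero_left, lb_zero_right]
    | add p q hp hq => rw [lb_add_left, lb_add_right, add_add_add_comm, hp, hq, add_zero]
    | single m a =>
      induction y using Finsupp.induction_linear with
      | zero => simp [lb_zero_left, lb_zero_right]
      | add p q hp hq => rw [lb_add_right, lb_add_left, add_add_add_comm, hp, hq, add_zero]
      | single n b =>
        rw [lb_single, lb_single, add_comm n m, add_add_add_comm,
          ← Finsupp.single_add, ← Finsupp.single_add]
        have h1 : br a b + br b a = 0 := by rw [hSkew a b]; abel
        have h2 : ((m : ℂ) • circ a b - (n : ℂ) • circ b a)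
            + ((n : ℂ) • circ b a - (m : ℂ) • circ a b) = 0 := by abel
        rw [h1, h2]
        simp
  · -- Jacobi identity
    intro x y z
    induction x using Finsupp.induction_linear with
    | zero => simp [lb_zero_left, lb_zero_right]
    | add p q hp hq =>
      simp only [lb_add_left, lb_add_right]
      linear_combination (norm := abel) hp + hq
    | single m a =>
      induction y using Finsupp.induction_linear with
      | zero => simp [lb_zero_left, lb_zero_right]
      | add p q hp hq =>
        simp only [lb_add_left, lb_add_right]
        linear_combination (norm := abel) hp + hq
      | single n b =>
        induction z using Finsupp.induction_linear with
        | zero => simp [lb_zero_left, lb_zero_right]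
        | add p q hp hq =>
          simp only [lb_add_left, lb_add_right]
          linear_combination (norm := abel) hp + hq
        | single k c =>
          have eab : circ (br a b) c + circ (br b a) c = 0 := by rw [hSkew a b]; simp
          have ebc : circ (br b c) a + circ (br c b) a = 0 := by rw [hSkew b c]; simp
          have eca : circ (br c a) b + circ (br a c) b = 0 := by rw [hSkew c a]; simp
          simp only [lb_single, lb_add_left]
          ext j
          simp only [Finsupp.coe_add, Pi.add_apply, Finsupp.single_apply,
            Finsupp.coe_zero, Pi.zero_apply]
          simp only [show n+k+m = m+n+k by ring, show k+m+n = m+n+k by ring,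
            show m+n-1+k = m+n+k-1 by ring, show n+k-1+m = m+n+k-1 by ring,
            show k+m-1+n = m+n+k-1 by ring, show m+n+k-1-1 = m+n+k-2 by ring]
          simp only [map_sub, map_smul, LinearMap.sub_apply, LinearMap.smul_apply]
          split_ifs with h1 h2 h3
          all_goals try omega
          all_goals simp only [add_zero, zero_add]
          · linear_combination (norm := module) hJacobi a b c
          · push_cast
            linear_combination (norm := module) (m:ℂ) • hCompat a b c + (m:ℂ) • eca
              + (n:ℂ) • hCompat b c a + (n:ℂ) • eab + (k:ℂ) • hCompat c a b + (k:ℂ) • ebc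
          · push_cast
            linear_combination (norm := module) ((m:ℂ)^2 - (m:ℂ)) • hNov2 a b c
              + ((n:ℂ)^2 - (n:ℂ)) • hNov2 b c a + ((k:ℂ)^2 - (k:ℂ)) • hNov2 c a b
              + ((m:ℂ)*(n:ℂ)) • hNov1 a b c + ((n:ℂ)*(k:ℂ)) • hNov1 b c a
              + ((k:ℂ)*(m:ℂ)) • hNov1 c a b
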